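/- arXiv:1807.09327 — 2 statements merged into one kernel-verified Lean document; each statement's English description precedes it below -/
import Mathlib

section
/- Fix p ∈ ℕ, p ≥ 1, h = 1/p. Every operator A on L²(𝕋^N → ℂ^M) of the form (A u)(x) = Σ_{j ∈ (ℤ/pℤ)^N} A_j(x) u(x + h j), where each A_j : 𝕋^N → ℂ^{M×M} is a step function constant on each cube ∏_i [h p_i, h p_i + h), is determined by the matrix B_A = (A_{j−r}(y + h r))_{r,j ∈ (ℤ/pℤ)^N} ∈ ℂ^{Mp^N × Mp^N} (independent of y ∈ [0,h)^N), and the assignment A ↦ B_A satisfies B_{αA+βB} = α B_A + β B_B, B_{A∘B} = B_A · B_B, and B_{A*} = (B_A)*. -/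
open MeasureTheory

noncomputable section

abbrev Torus (N : ℕ) := Fin N → AddCircle (1 : ℝ)

abbrev L2 (N M : ℕ) := Lp (EuclideanSpace ℂ (Fin M)) 2 (volume : Measure (Torus N))

/-- The canonical representative in `[0,1)` of a point of `𝕋 = ℝ/ℤ`. -/
def lift1 (x : AddCircle (1 : ℝ)) : ℝ := (AddCircle.equivIco 1 0 x : ℝ)

/-- The index (in `(ℤ/pℤ)^N`) of the cube `∏_i [h p_i, h p_i + h)`, `h = 1/p`,
containing the point `x ∈ 𝕋^N`. -/
def cubeIdx (N p : ℕ) [NeZero p] (x : Torus N) : Fin N → ZMod p :=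
  fun i => ((⌊lift1 (x i) * p⌋ : ℤ) : ZMod p)

/-- The shift vector `h j ∈ 𝕋^N` for `j ∈ (ℤ/pℤ)^N`, `h = 1/p`. -/
def hvec (N p : ℕ) [NeZero p] (j : Fin N → ZMod p) : Torus N :=
  fun i => ((((j i).val : ℝ) / p : ℝ) : AddCircle (1 : ℝ))

/-- The action of the finite-difference-type operator with cube-step coefficients:
`(A u)(x) = Σ_{j ∈ (ℤ/pℤ)^N} A_j(x) u(x + h j)`, where the step function `A_j` has the
constant value `C j r` on the cube indexed by `r`. -/
def opOf (N M p : ℕ) [NeZero p]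
    (C : (Fin N → ZMod p) → (Fin N → ZMod p) → Matrix (Fin M) (Fin M) ℂ)
    (u : Torus N → EuclideanSpace ℂ (Fin M)) : Torus N → EuclideanSpace ℂ (Fin M) :=
  fun x => ∑ j : Fin N → ZMod p,
    Matrix.toEuclideanCLM (𝕜 := ℂ) (C j (cubeIdx N p x)) (u (x + hvec N p j))

/-- The block matrix `B_A = (A_{j−r}(y + h r))_{r,j} ∈ ℂ^{Mp^N × Mp^N}` associated with the
coefficients `C` (the value `A_{j-r}(y + h r)` being the constant value of `A_{j-r}` on the
cube indexed by `r`). -/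
def Bmat (N M p : ℕ) [NeZero p]
    (C : (Fin N → ZMod p) → (Fin N → ZMod p) → Matrix (Fin M) (Fin M) ℂ) :
    Matrix ((Fin N → ZMod p) × Fin M) ((Fin N → ZMod p) × Fin M) ℂ :=
  fun rq jq => C (jq.1 - rq.1) rq.1 rq.2 jq.2

namespace Stmt6Aux

lemma lift1_coe (x : ℝ) : lift1 (x : AddCircle (1:ℝ)) = Int.fract x := by
  simp [lift1, AddCircle.coe_equivIco_mk_apply]

lemma coe_lift1 (z : AddCircle (1:ℝ)) : ((lift1 z : ℝ) : AddCircle (1:ℝ)) = z :=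
  (AddCircle.equivIco 1 0).symm_apply_apply z

lemma key1 (p : ℕ) [NeZero p] (z : AddCircle (1:ℝ)) (j : ZMod p) :
    ((⌊lift1 (z + ((((j.val : ℝ)) / p : ℝ) : AddCircle (1:ℝ))) * p⌋ : ℤ) : ZMod p)
      = ((⌊lift1 z * p⌋ : ℤ) : ZMod p) + j := by
  have hp : (p : ℝ) ≠ 0 := Nat.cast_ne_zero.mpr (NeZero.ne p)
  set a := lift1 z with ha
  set c : ℝ := (j.val : ℝ) / p with hc
  have hz : z = (a : AddCircle (1:ℝ)) := (coe_lift1 z).symm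
  have h1 : z + (c : AddCircle (1:ℝ)) = ((a + c : ℝ) : AddCircle (1:ℝ)) := by
    rw [hz]; rfl
  rw [h1, lift1_coe]
  have h2 : Int.fract (a + c) * p = (a + c) * p - (⌊a + c⌋ * p : ℤ) := by
    rw [Int.fract]; push_cast; ring
  have h3 : ⌊Int.fract (a + c) * p⌋ = ⌊(a + c) * p⌋ - ⌊a + c⌋ * p := by
    rw [h2, Int.floor_sub_intCast]
  have h4 : (a + c) * p = a * p + (j.val : ℝ) := by
    rw [add_mul, hc, div_mul_cancel₀ _ hp]
  have h5 : ⌊(a + c) * p⌋ = ⌊a * p⌋ + (j.val : ℤ) := by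
    rw [h4]; exact_mod_cast Int.floor_add_natCast (a * p) j.val
  rw [h3, h5]
  push_cast
  rw [ZMod.natCast_val, ZMod.cast_id]
  simp [ZMod.natCast_self]

lemma coe_nat_zero (n : ℕ) : ((n : ℝ) : AddCircle (1:ℝ)) = 0 := by
  rw [QuotientAddGroup.eq_zero_iff]
  exact ⟨n, by simp⟩

lemma hvec1_add (p : ℕ) [NeZero p] (j k : ZMod p) :
    ((((j + k).val : ℝ) / p : ℝ) : AddCircle (1:ℝ))
      = (((j.val : ℝ) / p : ℝ) : AddCircle (1:ℝ)) + (((k.val : ℝ) / p : ℝ) : AddCircle (1:ℝ)) := by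
  have hp : (p : ℝ) ≠ 0 := Nat.cast_ne_zero.mpr (NeZero.ne p)
  have h : (j.val + k.val : ℕ) = (j + k).val + p * ((j.val + k.val) / p) := by
    rw [ZMod.val_add]; exact (Nat.mod_add_div _ _).symm
  have h' : ((j.val : ℝ) + k.val) = ((j+k).val : ℝ) + p * (((j.val + k.val)/p : ℕ) : ℝ) := by
    exact_mod_cast congrArg (fun n : ℕ => (n : ℝ)) h
  have h2 : ((j.val : ℝ) / p) + ((k.val : ℝ) / p)
      = ((j + k).val : ℝ) / p + (((j.val + k.val) / p : ℕ) : ℝ) := by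
    rw [← add_div, h', add_div, mul_div_cancel_left₀ _ hp]
  have h3 : ((((j.val : ℝ) / p) + ((k.val : ℝ) / p) : ℝ) : AddCircle (1:ℝ))
      = ((((j+k).val : ℝ) / p : ℝ) : AddCircle (1:ℝ)) := by
    rw [h2]
    rw [show ((((j + k).val : ℝ) / p + (((j.val + k.val) / p : ℕ) : ℝ) : ℝ) : AddCircle (1:ℝ))
        = ((((j+k).val : ℝ) / p : ℝ) : AddCircle (1:ℝ))
          + (((((j.val + k.val) / p : ℕ) : ℝ)) : AddCircle (1:ℝ)) from rfl]
    rw [coe_nat_zero]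
    simp
  rw [← h3]; rfl

variable {N M p : ℕ} [NeZero p]

lemma hvec_add (j k : Fin N → ZMod p) :
    hvec N p (j + k) = hvec N p j + hvec N p k :=
  funext fun i => hvec1_add p (j i) (k i)

lemma hvec_zero : hvec N p 0 = 0 := by
  funext i
  simp [hvec, ZMod.val_zero]

lemma hvec_neg (j : Fin N → ZMod p) : hvec N p (-j) = - hvec N p j := by
  have : hvec N p (-j) + hvec N p j = 0 := by
    rw [← hvec_add, neg_add_cancel, hvec_zero]
  exact eq_neg_of_add_eq_zero_left this

lemma cubeIdx_add_hvec (x : Torus N) (j : Fin N → ZMod p) :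
    cubeIdx N p (x + hvec N p j) = cubeIdx N p x + j :=
  funext fun i => key1 p (x i) (j i)

lemma mp (c : Torus N) :
    MeasurePreserving (fun x : Torus N => x + c) volume volume :=
  measurePreserving_add_right volume c

lemma ae_translate {E : Type*} {f g : Torus N → E} (h : f =ᵐ[volume] g) (c : Torus N) :
    (fun x => f (x + c)) =ᵐ[volume] (fun x => g (x + c)) :=
  (mp c).quasiMeasurePreserving.ae_eq h

lemma opOf_congr (C : (Fin N → ZMod p) → (Fin N → ZMod p) → Matrix (Fin M) (Fin M) ℂ)
    {u v : Torus N → EuclideanSpace ℂ (Fin M)} (h : u =ᵐ[volume] v) :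
    opOf N M p C u =ᵐ[volume] opOf N M p C v := by
  have h2 : ∀ᵐ x ∂(volume : Measure (Torus N)), ∀ j : Fin N → ZMod p,
      u (x + hvec N p j) = v (x + hvec N p j) := by
    rw [MeasureTheory.ae_all_iff]
    exact fun j => ae_translate h (hvec N p j)
  filter_upwards [h2] with x hx
  unfold opOf
  exact Finset.sum_congr rfl fun j _ => by rw [hx j]

lemma measurable_lift1 : Measurable lift1 :=
  measurable_subtype_coe.comp (AddCircle.measurableEquivIco (1:ℝ) 0).measurable

lemma measurableSet_cube (r : Fin N → ZMod p) :
    MeasurableSet {x : Torus N | cubeIdx N p x = r} := by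
  have h : {x : Torus N | cubeIdx N p x = r}
      = ⋂ i, (fun x : Torus N => ⌊lift1 (x i) * p⌋) ⁻¹' {n : ℤ | ((n : ZMod p) = r i)} := by
    ext x
    simp [cubeIdx, funext_iff, Set.mem_iInter]
  rw [h]
  refine MeasurableSet.iInter fun i => ?_
  exact Measurable.floor ((measurable_lift1.comp (measurable_pi_apply i)).mul_const _) trivial

lemma memℒp_matrixApply (D : (Fin N → ZMod p) → Matrix (Fin M) (Fin M) ℂ)
    {w : Torus N → EuclideanSpace ℂ (Fin M)} (hw : MemLp w 2 volume) :
    MemLp (fun x => Matrix.toEuclideanCLM (𝕜 := ℂ) (D (cubeIdx N p x)) (w x)) 2 volume := by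
  have heq : (fun x => Matrix.toEuclideanCLM (𝕜 := ℂ) (D (cubeIdx N p x)) (w x))
      = fun x => ∑ r : Fin N → ZMod p,
          ({x : Torus N | cubeIdx N p x = r}).indicator
            (fun x => Matrix.toEuclideanCLM (𝕜 := ℂ) (D r) (w x)) x := by
    funext x
    rw [Finset.sum_eq_single (cubeIdx N p x)]
    · rw [Set.indicator_of_mem (by simp)]
    · intro r _ hr
      exact Set.indicator_of_notMem (fun hx => hr (by simpa using hx.symm)) _
    · simp
  rw [heq]
  have := memLp_finset_sum' Finset.univ fun (r : Fin N → ZMod p) (_ : r ∈ Finset.univ) =>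
    MemLp.indicator (μ := (volume : Measure (Torus N))) (measurableSet_cube r)
      ((Matrix.toEuclideanCLM (𝕜 := ℂ) (D r)).comp_memLp' hw)
  simp only [Finset.sum_fn] at this; exact this

lemma memℒp_opOf (C : (Fin N → ZMod p) → (Fin N → ZMod p) → Matrix (Fin M) (Fin M) ℂ)
    {u : Torus N → EuclideanSpace ℂ (Fin M)} (hu : MemLp u 2 volume) :
    MemLp (opOf N M p C u) 2 volume := by
  unfold opOf
  have := memLp_finset_sum' Finset.univ fun (j : Fin N → ZMod p) (_ : j ∈ Finset.univ) =>
    memℒp_matrixApply (fun r => C j r) (hu.comp_measurePreserving (mp (hvec N p j)))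
  simpa [Finset.sum_fn, Function.comp] using this

lemma integrable_inner_memℒp {f g : Torus N → EuclideanSpace ℂ (Fin M)}
    (hf : MemLp f 2 volume) (hg : MemLp g 2 volume) :
    Integrable (fun x => (inner ℂ (f x) (g x) : ℂ)) volume := by
  have h := L2.integrable_inner (𝕜 := ℂ) (hf.toLp f) (hg.toLp g)
  apply h.congr
  filter_upwards [hf.coeFn_toLp, hg.coeFn_toLp] with x h1 h2
  rw [h1, h2]

lemma inner_toCLM_left (A : Matrix (Fin M) (Fin M) ℂ) (w z : EuclideanSpace ℂ (Fin M)) :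
    (inner ℂ (Matrix.toEuclideanCLM (𝕜 := ℂ) A w) z : ℂ)
      = inner ℂ w (Matrix.toEuclideanCLM (𝕜 := ℂ) (star A) z) := by
  have hst : Matrix.toEuclideanCLM (𝕜 := ℂ) (star A)
      = ContinuousLinearMap.adjoint (Matrix.toEuclideanCLM (𝕜 := ℂ) A) := by
    rw [← ContinuousLinearMap.star_eq_adjoint, ← map_star]
  rw [hst, ContinuousLinearMap.adjoint_inner_right]

end Stmt6Aux

set_option maxHeartbeats 2000000 in
open Stmt6Aux in
/-- Fix `p ≥ 1`, `h = 1/p`.  Every operator of the form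
`(A u)(x) = Σ_j A_j(x) u(x + h j)` with cube-step coefficients is determined by the matrix
`B_A = (A_{j−r}(y + h r))_{r,j} ∈ ℂ^{Mp^N × Mp^N}`, and the assignment `A ↦ B_A` satisfies
`B_{αA+βB} = α B_A + β B_B`, `B_{A∘B} = B_A · B_B` and `B_{A*} = (B_A)*`. -/
theorem stmt6 (N M p : ℕ) [NeZero p]
    (CA CB : (Fin N → ZMod p) → (Fin N → ZMod p) → Matrix (Fin M) (Fin M) ℂ)
    (OA OB : L2 N M →L[ℂ] L2 N M)
    (hA : ∀ u : L2 N M,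
      (OA u : Torus N → EuclideanSpace ℂ (Fin M)) =ᵐ[volume] opOf N M p CA u)
    (hB : ∀ u : L2 N M,
      (OB u : Torus N → EuclideanSpace ℂ (Fin M)) =ᵐ[volume] opOf N M p CB u) :
    (Bmat N M p CA = Bmat N M p CB → OA = OB) ∧
    (∀ α β : ℂ, ∃ C, (∀ u : L2 N M,
        ((α • OA + β • OB) u : Torus N → EuclideanSpace ℂ (Fin M)) =ᵐ[volume]
          opOf N M p C u) ∧
      Bmat N M p C = α • Bmat N M p CA + β • Bmat N M p CB) ∧
    (∃ C, (∀ u : L2 N M,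
        ((OA.comp OB) u : Torus N → EuclideanSpace ℂ (Fin M)) =ᵐ[volume] opOf N M p C u) ∧
      Bmat N M p C = Bmat N M p CA * Bmat N M p CB) ∧
    (∃ C, (∀ u : L2 N M,
        ((ContinuousLinearMap.adjoint OA) u : Torus N → EuclideanSpace ℂ (Fin M)) =ᵐ[volume]
          opOf N M p C u) ∧
      Bmat N M p C = star (Bmat N M p CA)) := by
  refine ⟨?part1, ?part2, ?part3, ?part4⟩
  case part1 =>
    intro hBeq
    have hC : CA = CB := by
      funext j r
      ext q q'
      have := congrFun (congrFun hBeq (r, q)) (j + r, q')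
      simpa [Bmat] using this
    refine ContinuousLinearMap.ext fun u => Lp.ext (((hA u).trans ?_).trans (hB u).symm)
    rw [hC]
  case part2 =>
    intro α β
    refine ⟨fun j r => α • CA j r + β • CB j r, fun u => ?_, ?_⟩
    · have h0 : ((α • OA + β • OB) u) = α • (OA u) + β • (OB u) := by
        simp [ContinuousLinearMap.add_apply]
      rw [h0]
      filter_upwards [Lp.coeFn_add (α • (OA u)) (β • (OB u)), Lp.coeFn_smul α (OA u),
        Lp.coeFn_smul β (OB u), hA u, hB u] with x h1 h2 h3 h4 h5
      rw [h1, Pi.add_apply, h2, h3, Pi.smul_apply, Pi.smul_apply, h4, h5]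
      unfold opOf
      rw [Finset.smul_sum, Finset.smul_sum, ← Finset.sum_add_distrib]
      refine Finset.sum_congr rfl fun j _ => ?_
      rw [map_add, _root_.map_smul, _root_.map_smul]
      simp
    · funext rq jq
      simp [Bmat, Matrix.add_apply, Matrix.smul_apply]
  case part3 =>
    refine ⟨fun l r => ∑ j : Fin N → ZMod p, CA j r * CB (l - j) (r + j), fun u => ?_, ?_⟩
    · have h1 : ⇑((OA.comp OB) u) =ᵐ[volume] opOf N M p CA ⇑(OB u) := hA (OB u)
      have h2 : opOf N M p CA ⇑(OB u) =ᵐ[volume] opOf N M p CA (opOf N M p CB ⇑u) :=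
        opOf_congr CA (hB u)
      refine (h1.trans h2).trans (Filter.EventuallyEq.of_eq ?_)
      funext x
      unfold opOf
      calc
        ∑ j : Fin N → ZMod p, Matrix.toEuclideanCLM (𝕜 := ℂ) (CA j (cubeIdx N p x))
            (∑ k : Fin N → ZMod p, Matrix.toEuclideanCLM (𝕜 := ℂ)
              (CB k (cubeIdx N p (x + hvec N p j))) (⇑u (x + hvec N p j + hvec N p k)))
          = ∑ j : Fin N → ZMod p, ∑ k : Fin N → ZMod p,
              Matrix.toEuclideanCLM (𝕜 := ℂ) (CA j (cubeIdx N p x) * CB k (cubeIdx N p x + j))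
                (⇑u (x + hvec N p (j + k))) := by
            refine Finset.sum_congr rfl fun j _ => ?_
            rw [map_sum]
            refine Finset.sum_congr rfl fun k _ => ?_
            rw [cubeIdx_add_hvec, add_assoc, ← hvec_add, map_mul,
              ContinuousLinearMap.mul_apply]
        _ = ∑ j : Fin N → ZMod p, ∑ l : Fin N → ZMod p,
              Matrix.toEuclideanCLM (𝕜 := ℂ)
                (CA j (cubeIdx N p x) * CB (l - j) (cubeIdx N p x + j))
                (⇑u (x + hvec N p l)) := by
            refine Finset.sum_congr rfl fun j _ => ?_
            refine Fintype.sum_equiv (Equiv.addLeft j) _ _ fun k => ?_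
            simp [add_sub_cancel_left]
        _ = ∑ l : Fin N → ZMod p, ∑ j : Fin N → ZMod p,
              Matrix.toEuclideanCLM (𝕜 := ℂ)
                (CA j (cubeIdx N p x) * CB (l - j) (cubeIdx N p x + j))
                (⇑u (x + hvec N p l)) := Finset.sum_comm
        _ = ∑ l : Fin N → ZMod p,
              Matrix.toEuclideanCLM (𝕜 := ℂ)
                (∑ j : Fin N → ZMod p, CA j (cubeIdx N p x) * CB (l - j) (cubeIdx N p x + j))
                (⇑u (x + hvec N p l)) := by
            refine Finset.sum_congr rfl fun l _ => ?_
            rw [map_sum, ContinuousLinearMap.sum_apply]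
    · funext rq jq
      obtain ⟨r, q⟩ := rq
      obtain ⟨l, q'⟩ := jq
      show (∑ j : Fin N → ZMod p, CA j r * CB (l - r - j) (r + j)) q q' = _
      rw [Matrix.mul_apply, Matrix.sum_apply]
      rw [Fintype.sum_prod_type]
      simp only [Matrix.mul_apply]
      refine Fintype.sum_equiv (Equiv.addLeft r) _ _ fun j => ?_
      simp only [Bmat, Equiv.coe_addLeft, add_sub_cancel_left, sub_add_eq_sub_sub]
  case part4 =>
    refine ⟨fun k r => star (CA (-k) (r + k)), fun u => ?_, ?_⟩
    · have hmem : MemLp (opOf N M p (fun k r => star (CA (-k) (r + k))) ⇑u) 2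
          (volume : Measure (Torus N)) :=
        memℒp_opOf _ (Lp.memLp u)
      have hg : (ContinuousLinearMap.adjoint OA) u = hmem.toLp _ := by
        refine ext_inner_left ℂ fun v => ?_
        rw [ContinuousLinearMap.adjoint_inner_right]
        rw [L2.inner_def, L2.inner_def]
        have hterm : ∀ j : Fin N → ZMod p,
            MemLp (fun x => Matrix.toEuclideanCLM (𝕜 := ℂ) (CA j (cubeIdx N p x))
              (⇑v (x + hvec N p j))) 2 (volume : Measure (Torus N)) := fun j =>
          memℒp_matrixApply _ ((Lp.memLp v).comp_measurePreserving (mp _))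
        have htermC : ∀ k : Fin N → ZMod p,
            MemLp (fun x => Matrix.toEuclideanCLM (𝕜 := ℂ)
              (star (CA (-k) (cubeIdx N p x + k)))
              (⇑u (x + hvec N p k))) 2 (volume : Measure (Torus N)) := fun k =>
          memℒp_matrixApply (fun r => star (CA (-k) (r + k)))
            ((Lp.memLp u).comp_measurePreserving (mp _))
        calc
          ∫ x, (inner ℂ (⇑(OA v) x) (⇑u x) : ℂ) ∂volume
            = ∫ x, (inner ℂ (opOf N M p CA ⇑v x) (⇑u x) : ℂ) ∂volume := by
              refine integral_congr_ae ?_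
              filter_upwards [hA v] with x hx
              rw [hx]
          _ = ∫ x, ∑ j : Fin N → ZMod p,
                (inner ℂ (Matrix.toEuclideanCLM (𝕜 := ℂ) (CA j (cubeIdx N p x))
                  (⇑v (x + hvec N p j))) (⇑u x) : ℂ) ∂volume := by
              refine integral_congr_ae (Filter.EventuallyEq.of_eq (funext fun x => ?_))
              unfold opOf
              rw [sum_inner]
          _ = ∑ j : Fin N → ZMod p, ∫ x,
                (inner ℂ (Matrix.toEuclideanCLM (𝕜 := ℂ) (CA j (cubeIdx N p x))
                  (⇑v (x + hvec N p j))) (⇑u x) : ℂ) ∂volume :=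
              integral_finset_sum _ fun j _ =>
                integrable_inner_memℒp (hterm j) (Lp.memLp u)
          _ = ∑ j : Fin N → ZMod p, ∫ y,
                (inner ℂ (⇑v y) (Matrix.toEuclideanCLM (𝕜 := ℂ)
                  (star (CA j (cubeIdx N p y + -j))) (⇑u (y + hvec N p (-j)))) : ℂ)
                  ∂volume := by
              refine Finset.sum_congr rfl fun j _ => ?_
              have hcv := (mp (hvec N p (-j))).integral_comp
                (MeasurableEquiv.addRight (hvec N p (-j))).measurableEmbedding
                (fun x => (inner ℂ (Matrix.toEuclideanCLM (𝕜 := ℂ) (CA j (cubeIdx N p x))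
                  (⇑v (x + hvec N p j))) (⇑u x) : ℂ))
              rw [← hcv]
              refine integral_congr_ae (Filter.EventuallyEq.of_eq (funext fun y => ?_))
              show (inner ℂ (Matrix.toEuclideanCLM (𝕜 := ℂ)
                  (CA j (cubeIdx N p (y + hvec N p (-j))))
                  (⇑v (y + hvec N p (-j) + hvec N p j))) (⇑u (y + hvec N p (-j))) : ℂ) = _
              rw [cubeIdx_add_hvec, add_assoc, ← hvec_add, neg_add_cancel, hvec_zero,
                add_zero, inner_toCLM_left]
          _ = ∑ k : Fin N → ZMod p, ∫ y,
                (inner ℂ (⇑v y) (Matrix.toEuclideanCLM (𝕜 := ℂ)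
                  (star (CA (-k) (cubeIdx N p y + k))) (⇑u (y + hvec N p k))) : ℂ)
                  ∂volume := by
              refine Fintype.sum_equiv (Equiv.neg _) _ _ fun j => ?_
              simp [neg_neg]
          _ = ∫ y, ∑ k : Fin N → ZMod p,
                (inner ℂ (⇑v y) (Matrix.toEuclideanCLM (𝕜 := ℂ)
                  (star (CA (-k) (cubeIdx N p y + k))) (⇑u (y + hvec N p k))) : ℂ)
                  ∂volume :=
              (integral_finset_sum _ fun k _ =>
                integrable_inner_memℒp (Lp.memLp v) (htermC k)).symm
          _ = ∫ y, (inner ℂ (⇑v y)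
                (opOf N M p (fun k r => star (CA (-k) (r + k))) ⇑u y) : ℂ) ∂volume := by
              refine integral_congr_ae (Filter.EventuallyEq.of_eq (funext fun y => ?_))
              unfold opOf
              rw [inner_sum]
          _ = ∫ x, (inner ℂ (⇑v x) (⇑(hmem.toLp _) x) : ℂ) ∂volume := by
              refine integral_congr_ae ?_
              filter_upwards [hmem.coeFn_toLp] with x hx
              rw [hx]
      rw [hg]
      exact hmem.coeFn_toLp
    · funext rq jq
      obtain ⟨r, q⟩ := rq
      obtain ⟨j, q'⟩ := jq
      show star (CA (-(j - r)) (r + (j - r))) q q' = _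
      simp [Bmat, Matrix.star_apply, neg_sub, add_sub_cancel]
end
end

section
/- Fix p ∈ ℕ, p ≥ 1, h = 1/p. The *-algebra H^h of operators on L²(𝕋^N → ℂ^M) of the form (A u)(x) = Σ_{j ∈ (ℤ/pℤ)^N} A_j(x) u(x + h j), with each A_j a step function constant on cubes of side h, is *-isomorphic to the full matrix algebra ℂ^{Mp^N × Mp^N}; in particular the map A ↦ B_A from the previous construction is bijective. -/
open MeasureTheory

noncomputable section

lemma lift1_coe (t : ℝ) : lift1 ((t : ℝ) : AddCircle (1:ℝ)) = Int.fract t := by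
  simp [lift1, AddCircle.coe_equivIco_mk_apply]

lemma coe_eq_coe {a b : ℝ} (d : ℤ) (h : a - b = d) :
    ((a : ℝ) : AddCircle (1:ℝ)) = b := by
  rw [QuotientAddGroup.eq_iff_sub_mem, h]
  have : (d:ℝ) = d • (1:ℝ) := by simp
  rw [this]
  exact AddSubgroup.zsmul_mem _ (AddSubgroup.mem_zmultiples 1) d

lemma coe_lift1 (y : AddCircle (1:ℝ)) : ((lift1 y : ℝ) : AddCircle (1:ℝ)) = y := by
  obtain ⟨t, rfl⟩ := QuotientAddGroup.mk_surjective y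
  rw [lift1_coe]
  refine coe_eq_coe (-⌊t⌋) ?_
  rw [Int.fract]
  push_cast
  ring

lemma hvec_zero (N p : ℕ) [NeZero p] : hvec N p 0 = 0 := by
  funext i; simp [hvec]

lemma hvec_add (N p : ℕ) [NeZero p] (j k : Fin N → ZMod p) :
    hvec N p (j + k) = hvec N p j + hvec N p k := by
  funext i
  have hp : (p:ℝ) ≠ 0 := Nat.cast_ne_zero.mpr (NeZero.ne p)
  show _ = (_ : AddCircle (1:ℝ))
  simp only [hvec, Pi.add_apply]
  rw [← QuotientAddGroup.mk_add]
  set a := (j i).val with ha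
  set b := (k i).val with hb
  set q := (a + b) / p with hq
  set c := (a + b) % p with hc
  apply coe_eq_coe (-(q:ℤ))
  have h0 : c + p * q = a + b := Nat.mod_add_div (a+b) p
  have h1 : (c:ℝ) + (p:ℝ) * q = (a:ℝ) + b := by exact_mod_cast congrArg (Nat.cast : ℕ → ℝ) h0
  have hv : (j i + k i).val = c := ZMod.val_add (j i) (k i)
  rw [hv]
  rw [show (c:ℝ) = (a:ℝ) + b - p*q by linarith]
  field_simp
  push_cast
  ring

lemma cubeIdx_add (N p : ℕ) [NeZero p] (x : Torus N) (j : Fin N → ZMod p) :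
    cubeIdx N p (x + hvec N p j) = cubeIdx N p x + j := by
  funext i
  have hp : (p:ℝ) ≠ 0 := Nat.cast_ne_zero.mpr (NeZero.ne p)
  simp only [cubeIdx, Pi.add_apply, hvec]
  set a := lift1 (x i) with ha
  have hx : x i = ((a : ℝ) : AddCircle (1:ℝ)) := (coe_lift1 (x i)).symm
  rw [hx, ← QuotientAddGroup.mk_add, lift1_coe]
  set t := a + ((j i).val : ℝ) / p with ht
  set m := ⌊t⌋ with hm
  have hfr : Int.fract t * p = t * p - (m:ℝ) * p := by rw [Int.fract]; ring
  have h2 : t * p = a * p + ((j i).val : ℝ) := by rw [ht, add_mul, div_mul_cancel₀ _ hp]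
  have h1 : Int.fract t * p = a * p + ((((j i).val : ℤ) - m * p : ℤ) : ℝ) := by
    rw [hfr, h2]; push_cast; ring
  rw [h1, Int.floor_add_intCast]
  push_cast [ZMod.natCast_self]
  simp [ZMod.natCast_val, ZMod.cast_id]

section Cubes
variable (N p : ℕ) [NeZero p]

def cube (r : Fin N → ZMod p) : Set (Torus N) := cubeIdx N p ⁻¹' {r}

lemma measurable_lift1 : Measurable lift1 := by
  have : lift1 = fun y => ((AddCircle.measurableEquivIco (1:ℝ) 0 y : ℝ)) := rfl
  rw [this]
  exact measurable_subtype_coe.comp (AddCircle.measurableEquivIco (1:ℝ) 0).measurable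

lemma measurableSet_A (c : ZMod p) :
    MeasurableSet {y : AddCircle (1:ℝ) | ((⌊lift1 y * p⌋ : ℤ) : ZMod p) = c} := by
  have : {y : AddCircle (1:ℝ) | ((⌊lift1 y * p⌋ : ℤ) : ZMod p) = c}
      = (fun y => ⌊lift1 y * p⌋) ⁻¹' {z : ℤ | (z : ZMod p) = c} := rfl
  rw [this]
  exact ((measurable_lift1.mul_const _).floor) (Set.to_countable _).measurableSet

lemma cube_eq_pi (r : Fin N → ZMod p) :
    cube N p r = Set.pi Set.univ (fun i => {y : AddCircle (1:ℝ) | ((⌊lift1 y * p⌋ : ℤ) : ZMod p) = r i}) := by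
  ext x
  simp only [cube, Set.mem_preimage, Set.mem_singleton_iff, Set.mem_pi, Set.mem_univ, true_implies,
    Set.mem_setOf_eq, funext_iff]
  exact Iff.rfl

lemma measurableSet_cube (r : Fin N → ZMod p) : MeasurableSet (cube N p r) := by
  rw [cube_eq_pi]
  exact MeasurableSet.univ_pi (fun i => measurableSet_A p (r i))

lemma volume_A_pos (c : ZMod p) :
    volume {y : AddCircle (1:ℝ) | ((⌊lift1 y * p⌋ : ℤ) : ZMod p) = c} ≠ 0 := by
  have hp : (0:ℝ) < p := Nat.cast_pos.mpr (Nat.pos_of_ne_zero (NeZero.ne p))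
  set v := c.val with hv
  have hvlt : (v:ℝ) < p := by exact_mod_cast ZMod.val_lt c
  set S := {y : AddCircle (1:ℝ) | ((⌊lift1 y * p⌋ : ℤ) : ZMod p) = c}
  have hmeas : volume S = volume (QuotientAddGroup.mk ⁻¹' S ∩ Set.Ioc (0:ℝ) (0 + 1)) :=
    AddCircle.add_projection_respects_measure (T := 1) 0 (measurableSet_A p c)
  have hsub : Set.Ioo ((v:ℝ)/p) ((v+1)/p) ⊆ QuotientAddGroup.mk ⁻¹' S ∩ Set.Ioc (0:ℝ) (0+1) := by
    intro t ht
    obtain ⟨ht1, ht2⟩ := ht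
    have h0t : 0 < t := lt_of_le_of_lt (by positivity) ht1
    have htlt1 : t < 1 := by
      calc t < ((v:ℝ)+1)/p := ht2
        _ ≤ 1 := by
          rw [div_le_one hp]
          have : (v:ℝ) + 1 ≤ p := by
            have : v + 1 ≤ p := ZMod.val_lt c
            exact_mod_cast this
          linarith
    constructor
    · show ((t : ℝ) : AddCircle (1:ℝ)) ∈ S
      show ((⌊lift1 ((t:ℝ) : AddCircle (1:ℝ)) * p⌋ : ℤ) : ZMod p) = c
      rw [lift1_coe, Int.fract_eq_self.mpr ⟨le_of_lt h0t, htlt1⟩]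
      have hfl : ⌊t * (p:ℝ)⌋ = (v:ℤ) := by
        rw [Int.floor_eq_iff]
        constructor
        · push_cast
          rw [div_lt_iff₀ hp] at ht1
          linarith
        · push_cast
          rw [lt_div_iff₀ hp] at ht2
          linarith
      rw [hfl]
      simp [hv, ZMod.natCast_val, ZMod.cast_id]
    · exact ⟨h0t, by linarith⟩
  rw [hmeas]
  intro hzero
  have hle := measure_mono (μ := (volume : Measure ℝ)) hsub
  rw [hzero, nonpos_iff_eq_zero, Real.volume_Ioo, ENNReal.ofReal_eq_zero] at hle
  have hgap : (0:ℝ) < ((v:ℝ)+1)/p - (v:ℝ)/p := by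
    have : ((v:ℝ)+1)/p - (v:ℝ)/p = 1/p := by field_simp; ring
    rw [this]; positivity
  linarith

lemma volume_cube_pos (r : Fin N → ZMod p) : volume (cube N p r) ≠ 0 := by
  rw [cube_eq_pi]
  rw [MeasureTheory.volume_pi_pi]
  exact Finset.prod_ne_zero_iff.mpr (fun i _ => volume_A_pos p (r i))

lemma mp_tau (c : Torus N) :
    MeasurePreserving (fun x => x + c) (volume : Measure (Torus N)) volume :=
  measurePreserving_add_right volume c

def tauEquiv (c : Torus N) : Torus N ≃ᵐ Torus N := MeasurableEquiv.addRight c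

end Cubes

section OpLayer
variable (N M p : ℕ) [NeZero p]

local notation "𝕄" => Matrix (Fin M) (Fin M) ℂ

lemma lp_coeFn_sum {ι : Type*} (s : Finset ι) (f : ι → L2 N M) :
    ⇑(∑ i ∈ s, f i) =ᵐ[volume] fun x => ∑ i ∈ s, f i x := by
  classical
  induction s using Finset.induction_on with
  | empty =>
    simp only [Finset.sum_empty]
    filter_upwards [Lp.coeFn_zero (EuclideanSpace ℂ (Fin M)) 2 (volume : Measure (Torus N))]
      with x hx
    simpa using hx
  | @insert a t hnotmem ih =>
    rw [Finset.sum_insert hnotmem]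
    filter_upwards [Lp.coeFn_add (f a) (∑ i ∈ t, f i), ih] with x hx hx2
    rw [hx]
    show f a x + (∑ i ∈ t, f i) x = _
    rw [hx2, Finset.sum_insert hnotmem]

def indCLM (s : Set (Torus N)) (hs : MeasurableSet s) : L2 N M →L[ℂ] L2 N M :=
  LinearMap.mkContinuous
    { toFun := fun u => ((Lp.memLp u).indicator hs).toLp (s.indicator u)
      map_add' := fun u v => by
        classical
        rw [← MemLp.toLp_add]
        refine MemLp.toLp_congr _ _ ?_
        filter_upwards [Lp.coeFn_add u v] with x hx
        simp only [Pi.add_apply, Set.indicator_apply]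
        split_ifs with hmem
        · exact hx
        · simp
      map_smul' := fun c u => by
        classical
        rw [RingHom.id_apply, ← MemLp.toLp_const_smul]
        refine MemLp.toLp_congr _ _ ?_
        filter_upwards [Lp.coeFn_smul c u] with x hx
        simp only [Pi.smul_apply, Set.indicator_apply]
        split_ifs with hmem
        · exact hx
        · simp }
    1
    (fun u => by
      simp only [LinearMap.coe_mk, AddHom.coe_mk, one_mul]
      rw [Lp.norm_toLp, Lp.norm_def]
      exact ENNReal.toReal_mono (Lp.eLpNorm_ne_top u) (eLpNorm_indicator_le _))

lemma coeFn_indCLM (s : Set (Torus N)) (hs : MeasurableSet s) (u : L2 N M) :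
    ⇑(indCLM N M s hs u) =ᵐ[volume] s.indicator ⇑u := by
  have e : indCLM N M s hs u = ((Lp.memLp u).indicator hs).toLp (s.indicator u) := by
    simp only [indCLM, LinearMap.mkContinuous_apply, LinearMap.coe_mk, AddHom.coe_mk]
  rw [e]
  have hm : MemLp (s.indicator ⇑u) 2 (volume : Measure (Torus N)) := (Lp.memLp u).indicator hs
  exact MemLp.coeFn_toLp hm

def trCLM (j : Fin N → ZMod p) : L2 N M →L[ℂ] L2 N M :=
  (Lp.compMeasurePreservingₗᵢ (E := EuclideanSpace ℂ (Fin M)) (p := 2) ℂ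
    (fun x => x + hvec N p j) (mp_tau N (hvec N p j))).toContinuousLinearMap

lemma coeFn_trCLM (j : Fin N → ZMod p) (u : L2 N M) :
    ⇑(trCLM N M p j u) =ᵐ[volume] fun x => u (x + hvec N p j) :=
  Lp.coeFn_compMeasurePreserving u _

def matCLM (A : 𝕄) : L2 N M →L[ℂ] L2 N M :=
  (Matrix.toEuclideanCLM (𝕜 := ℂ) A).compLpL 2 volume

lemma coeFn_matCLM (A : 𝕄) (u : L2 N M) :
    ⇑(matCLM N M A u) =ᵐ[volume] fun x => Matrix.toEuclideanCLM (𝕜 := ℂ) A (u x) :=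
  ContinuousLinearMap.coeFn_compLpL _ u

def termCLM (C : (Fin N → ZMod p) → (Fin N → ZMod p) → 𝕄) (j : Fin N → ZMod p) :
    L2 N M →L[ℂ] L2 N M :=
  ∑ r : Fin N → ZMod p,
    (indCLM N M (cube N p r) (measurableSet_cube N p r)).comp
      ((matCLM N M (C j r)).comp (trCLM N M p j))

lemma coeFn_termCLM (C : (Fin N → ZMod p) → (Fin N → ZMod p) → 𝕄) (j : Fin N → ZMod p)
    (u : L2 N M) :
    ⇑(termCLM N M p C j u) =ᵐ[volume]
      fun x => Matrix.toEuclideanCLM (𝕜 := ℂ) (C j (cubeIdx N p x)) (u (x + hvec N p j)) := by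
  classical
  have happ : termCLM N M p C j u
      = ∑ r : Fin N → ZMod p, indCLM N M (cube N p r) (measurableSet_cube N p r)
          (matCLM N M (C j r) (trCLM N M p j u)) := by
    simp [termCLM, ContinuousLinearMap.sum_apply]
  rw [happ]
  have h1 : ∀ᵐ x ∂(volume : Measure (Torus N)), ∀ r : Fin N → ZMod p,
      indCLM N M (cube N p r) (measurableSet_cube N p r)
        (matCLM N M (C j r) (trCLM N M p j u)) x
      = (cube N p r).indicator (⇑(matCLM N M (C j r) (trCLM N M p j u))) x :=
    MeasureTheory.ae_all_iff.mpr (fun r => coeFn_indCLM N M _ _ _)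
  have h2 : ∀ᵐ x ∂(volume : Measure (Torus N)), ∀ r : Fin N → ZMod p,
      matCLM N M (C j r) (trCLM N M p j u) x
      = Matrix.toEuclideanCLM (𝕜 := ℂ) (C j r) (trCLM N M p j u x) :=
    MeasureTheory.ae_all_iff.mpr (fun r => coeFn_matCLM N M _ _)
  filter_upwards [lp_coeFn_sum N M Finset.univ
      (fun r => indCLM N M (cube N p r) (measurableSet_cube N p r)
        (matCLM N M (C j r) (trCLM N M p j u))), h1, h2,
      coeFn_trCLM N M p j u] with x hx hx1 hx2 hx3
  rw [hx]
  have : ∀ r : Fin N → ZMod p,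
      indCLM N M (cube N p r) (measurableSet_cube N p r)
        (matCLM N M (C j r) (trCLM N M p j u)) x
      = if cubeIdx N p x = r then Matrix.toEuclideanCLM (𝕜 := ℂ) (C j r) (u (x + hvec N p j)) else 0 := by
    intro r
    rw [hx1 r, Set.indicator_apply]
    by_cases hmem : x ∈ cube N p r
    · have hr : cubeIdx N p x = r := hmem
      rw [if_pos hmem, if_pos hr, hx2 r, hx3]
    · have hr : ¬ cubeIdx N p x = r := hmem
      rw [if_neg hmem, if_neg hr]
  rw [Finset.sum_congr rfl (fun r _ => this r)]
  rw [Finset.sum_ite_eq Finset.univ (cubeIdx N p x)]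
  simp

def opCLM (C : (Fin N → ZMod p) → (Fin N → ZMod p) → 𝕄) : L2 N M →L[ℂ] L2 N M :=
  ∑ j : Fin N → ZMod p, termCLM N M p C j

lemma coeFn_opCLM (C : (Fin N → ZMod p) → (Fin N → ZMod p) → 𝕄) (u : L2 N M) :
    ⇑(opCLM N M p C u) =ᵐ[volume] opOf N M p C ⇑u := by
  have happ : opCLM N M p C u = ∑ j : Fin N → ZMod p, termCLM N M p C j u := by
    simp [opCLM, ContinuousLinearMap.sum_apply]
  rw [happ]
  have h1 : ∀ᵐ x ∂(volume : Measure (Torus N)), ∀ j : Fin N → ZMod p,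
      termCLM N M p C j u x
      = Matrix.toEuclideanCLM (𝕜 := ℂ) (C j (cubeIdx N p x)) (u (x + hvec N p j)) :=
    MeasureTheory.ae_all_iff.mpr (fun j => coeFn_termCLM N M p C j u)
  filter_upwards [lp_coeFn_sum N M Finset.univ (fun j => termCLM N M p C j u), h1] with x hx hx1
  rw [hx]
  exact Finset.sum_congr rfl (fun j _ => hx1 j)

end OpLayer



section Algebra
variable (N M p : ℕ) [NeZero p]

local notation "𝕄" => Matrix (Fin M) (Fin M) ℂ
local notation "Coef" => ((Fin N → ZMod p) → (Fin N → ZMod p) → Matrix (Fin M) (Fin M) ℂ)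

def mulC (C C' : Coef) : Coef :=
  fun m r => ∑ j : Fin N → ZMod p, C j r * C' (m - j) (r + j)

def Cdag (C : Coef) : Coef := fun j r => star (C (-j) (r + j))

def CB (B : Matrix ((Fin N → ZMod p) × Fin M) ((Fin N → ZMod p) × Fin M) ℂ) : Coef :=
  fun j r => fun q q' => B (r, q) (r + j, q')

lemma CB_Bmat (C : Coef) : CB N M p (Bmat N M p C) = C := by
  funext j r q q'
  simp [CB, Bmat]

lemma Bmat_CB (B : Matrix ((Fin N → ZMod p) × Fin M) ((Fin N → ZMod p) × Fin M) ℂ) :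
    Bmat N M p (CB N M p B) = B := by
  funext rq jq
  show CB N M p B (jq.1 - rq.1) rq.1 rq.2 jq.2 = B rq jq
  simp [CB]

lemma opOf_congr (C : Coef) {u v : Torus N → EuclideanSpace ℂ (Fin M)}
    (huv : u =ᵐ[volume] v) : opOf N M p C u =ᵐ[volume] opOf N M p C v := by
  have h : ∀ᵐ x ∂(volume : Measure (Torus N)), ∀ j : Fin N → ZMod p,
      u (x + hvec N p j) = v (x + hvec N p j) :=
    MeasureTheory.ae_all_iff.mpr (fun j =>
      (mp_tau N (hvec N p j)).quasiMeasurePreserving.ae_eq_comp huv)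
  filter_upwards [h] with x hx
  simp only [opOf]
  exact Finset.sum_congr rfl (fun j _ => by rw [hx j])

lemma opOf_add (C C' : Coef) (u : Torus N → EuclideanSpace ℂ (Fin M)) :
    opOf N M p (C + C') u = opOf N M p C u + opOf N M p C' u := by
  funext x
  simp only [opOf, Pi.add_apply, map_add, ContinuousLinearMap.add_apply]
  rw [← Finset.sum_add_distrib]

lemma opOf_sub (C C' : Coef) (u : Torus N → EuclideanSpace ℂ (Fin M)) :
    opOf N M p (C - C') u = opOf N M p C u - opOf N M p C' u := by
  funext x
  simp only [opOf, Pi.sub_apply, map_sub, ContinuousLinearMap.sub_apply]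
  rw [← Finset.sum_sub_distrib]

lemma opOf_smul (c : ℂ) (C : Coef) (u : Torus N → EuclideanSpace ℂ (Fin M)) :
    opOf N M p (c • C) u = c • opOf N M p C u := by
  funext x
  simp only [opOf, Pi.smul_apply, _root_.map_smul, ContinuousLinearMap.smul_apply]
  rw [← Finset.smul_sum]

lemma opOf_CB_one (u : Torus N → EuclideanSpace ℂ (Fin M)) :
    opOf N M p (CB N M p 1) u = u := by
  classical
  funext x
  have hC : ∀ j : Fin N → ZMod p, CB N M p 1 j (cubeIdx N p x) = if j = 0 then (1 : 𝕄) else 0 := by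
    intro j
    funext q q'
    by_cases hj : j = 0
    · subst hj
      simp [CB, Matrix.one_apply, Prod.ext_iff]
    · have : ¬ ((cubeIdx N p x, q) = (cubeIdx N p x + j, q')) := by
        intro hcon
        apply hj
        have := (Prod.ext_iff.mp hcon).1
        rwa [left_eq_add] at this
      simp [CB, Matrix.one_apply, this, hj]
  simp only [opOf]
  have step : ∀ j : Fin N → ZMod p,
      (Matrix.toEuclideanCLM (𝕜 := ℂ) (CB N M p 1 j (cubeIdx N p x))) (u (x + hvec N p j))
      = if j = 0 then u (x + hvec N p j) else 0 := by
    intro j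
    rw [hC j]
    split_ifs <;> simp
  rw [Finset.sum_congr rfl (fun j _ => step j)]
  rw [Finset.sum_ite_eq' Finset.univ (0 : Fin N → ZMod p) (fun j => u (x + hvec N p j))]
  simp [hvec_zero]

lemma opOf_comp (C C' : Coef) (u : Torus N → EuclideanSpace ℂ (Fin M)) :
    opOf N M p C (opOf N M p C' u) = opOf N M p (mulC N M p C C') u := by
  classical
  funext x
  set R := cubeIdx N p x with hR
  have lhs : opOf N M p C (opOf N M p C' u) x
      = ∑ j : Fin N → ZMod p, ∑ k : Fin N → ZMod p,
          Matrix.toEuclideanCLM (𝕜 := ℂ) (C j R)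
            (Matrix.toEuclideanCLM (𝕜 := ℂ) (C' k (R + j)) (u (x + hvec N p (j + k)))) := by
    simp only [opOf, ← hR]
    refine Finset.sum_congr rfl (fun j _ => ?_)
    rw [cubeIdx_add, ← hR, map_sum]
    refine Finset.sum_congr rfl (fun k _ => ?_)
    rw [hvec_add, ← add_assoc]
  rw [lhs]
  have reidx : ∀ j : Fin N → ZMod p,
      (∑ k : Fin N → ZMod p, Matrix.toEuclideanCLM (𝕜 := ℂ) (C j R)
        (Matrix.toEuclideanCLM (𝕜 := ℂ) (C' k (R + j)) (u (x + hvec N p (j + k)))))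
      = ∑ m : Fin N → ZMod p, Matrix.toEuclideanCLM (𝕜 := ℂ) (C j R)
        (Matrix.toEuclideanCLM (𝕜 := ℂ) (C' (m - j) (R + j)) (u (x + hvec N p m))) := by
    intro j
    refine Fintype.sum_equiv (Equiv.addLeft j) _ _ (fun k => ?_)
    simp [Equiv.coe_addLeft, add_sub_cancel_left]
  rw [Finset.sum_congr rfl (fun j _ => reidx j), Finset.sum_comm]
  simp only [opOf, mulC, ← hR]
  refine Finset.sum_congr rfl (fun m _ => ?_)
  rw [map_sum, ContinuousLinearMap.sum_apply]
  refine Finset.sum_congr rfl (fun j _ => ?_)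
  rw [map_mul, ContinuousLinearMap.mul_apply]

lemma CB_mul (B B' : Matrix ((Fin N → ZMod p) × Fin M) ((Fin N → ZMod p) × Fin M) ℂ) :
    mulC N M p (CB N M p B) (CB N M p B') = CB N M p (B * B') := by
  classical
  funext m r q q'
  show (∑ j : Fin N → ZMod p, CB N M p B j r * CB N M p B' (m - j) (r + j)) q q' = _
  rw [Matrix.sum_apply]
  simp only [Matrix.mul_apply, CB]
  rw [Fintype.sum_prod_type]
  refine Fintype.sum_equiv (Equiv.addLeft r) _ _ (fun j => ?_)
  simp only [Equiv.coe_addLeft]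
  refine Finset.sum_congr rfl (fun q'' _ => ?_)
  rw [add_add_sub_cancel]

lemma CB_star (B : Matrix ((Fin N → ZMod p) × Fin M) ((Fin N → ZMod p) × Fin M) ℂ) :
    CB N M p (star B) = Cdag N M p (CB N M p B) := by
  funext j r q q'
  show (star B) (r, q) (r + j, q') = star (CB N M p B (-j) (r + j)) q q'
  simp only [Matrix.star_eq_conjTranspose, Matrix.conjTranspose_apply, CB]
  rw [add_neg_cancel_right]

end Algebra


section Main
variable (N M p : ℕ) [NeZero p]

local notation "𝕄" => Matrix (Fin M) (Fin M) ℂ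
local notation "Coef" => ((Fin N → ZMod p) → (Fin N → ZMod p) → Matrix (Fin M) (Fin M) ℂ)
local notation "⟪" a ", " b "⟫" => (inner ℂ a b : ℂ)

lemma opCLM_unique {C : Coef} {T : L2 N M →L[ℂ] L2 N M}
    (h : ∀ u : L2 N M, ⇑(T u) =ᵐ[volume] opOf N M p C ⇑u) : T = opCLM N M p C := by
  refine ContinuousLinearMap.ext fun u => ?_
  exact Lp.ext ((h u).trans (coeFn_opCLM N M p C u).symm)

lemma C_eq_zero {C : Coef} (h : opCLM N M p C = 0) : C = 0 := by
  classical
  have key : ∀ (s r : Fin N → ZMod p) (q : Fin M),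
      Matrix.toEuclideanCLM (𝕜 := ℂ) (C (s - r) r) (EuclideanSpace.single q 1) = 0 := by
    intro s r q
    have hmem : MemLp ((cube N p s).indicator
        (fun _ => (EuclideanSpace.single q 1 : EuclideanSpace ℂ (Fin M)))) 2
        (volume : Measure (Torus N)) :=
      memLp_indicator_const 2 (measurableSet_cube N p s) _ (Or.inr (measure_ne_top _ _))
    set u : L2 N M := hmem.toLp _ with hu
    set g : Torus N → EuclideanSpace ℂ (Fin M) := fun x =>
      Matrix.toEuclideanCLM (𝕜 := ℂ) (C (s - cubeIdx N p x) (cubeIdx N p x))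
        (EuclideanSpace.single q 1) with hg
    have hopf : opOf N M p C ((cube N p s).indicator
        (fun _ => (EuclideanSpace.single q 1 : EuclideanSpace ℂ (Fin M)))) = g := by
      funext x
      simp only [opOf]
      have step : ∀ j : Fin N → ZMod p,
          Matrix.toEuclideanCLM (𝕜 := ℂ) (C j (cubeIdx N p x))
            ((cube N p s).indicator
              (fun _ => (EuclideanSpace.single q 1 : EuclideanSpace ℂ (Fin M)))
              (x + hvec N p j))
          = if j = s - cubeIdx N p x then
              Matrix.toEuclideanCLM (𝕜 := ℂ) (C j (cubeIdx N p x)) (EuclideanSpace.single q 1)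
            else 0 := by
        intro j
        rw [Set.indicator_apply]
        have hiff : (x + hvec N p j ∈ cube N p s) ↔ j = s - cubeIdx N p x := by
          show cubeIdx N p (x + hvec N p j) = s ↔ _
          rw [cubeIdx_add]
          constructor
          · intro hh; rw [← hh]; rw [add_sub_cancel_left]
          · intro hh; rw [hh]; rw [add_sub_cancel]
        by_cases hmem2 : x + hvec N p j ∈ cube N p s
        · rw [if_pos hmem2, if_pos (hiff.mp hmem2)]
        · rw [if_neg hmem2, if_neg (fun hc => hmem2 (hiff.mpr hc)), map_zero]
      rw [Finset.sum_congr rfl (fun j _ => step j)]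
      rw [Finset.sum_ite_eq' Finset.univ (s - cubeIdx N p x)
        (fun j => Matrix.toEuclideanCLM (𝕜 := ℂ) (C j (cubeIdx N p x)) (EuclideanSpace.single q 1))]
      simp [hg]
    have hz : g =ᵐ[volume] (fun _ => (0 : EuclideanSpace ℂ (Fin M))) := by
      have h1 : ⇑(opCLM N M p C u) =ᵐ[volume] (fun _ => (0 : EuclideanSpace ℂ (Fin M))) := by
        rw [h]
        simp only [ContinuousLinearMap.zero_apply]
        exact Lp.coeFn_zero _ _ _
      have h2 : opOf N M p C ⇑u =ᵐ[volume] g := by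
        refine (opOf_congr N M p C hmem.coeFn_toLp).trans ?_
        rw [hopf]
      exact h2.symm.trans ((coeFn_opCLM N M p C u).symm.trans h1)
    -- find a point in cube r where g vanishes
    obtain ⟨x, hxr, hx0⟩ := MeasureTheory.Measure.exists_mem_of_measure_ne_zero_of_ae
      (volume_cube_pos N p r) (ae_restrict_of_ae hz)
    have hR : cubeIdx N p x = r := hxr
    rw [hg] at hx0
    simpa [hR] using hx0
  funext m r
  have hq : ∀ q : Fin M,
      Matrix.toEuclideanCLM (𝕜 := ℂ) (C m r) (EuclideanSpace.single q 1) = 0 := by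
    intro q
    have := key (r + m) r q
    rwa [add_sub_cancel_left] at this
  have hLM : ((Matrix.toEuclideanCLM (𝕜 := ℂ) (C m r) :
      EuclideanSpace ℂ (Fin M) →L[ℂ] EuclideanSpace ℂ (Fin M)) :
      EuclideanSpace ℂ (Fin M) →ₗ[ℂ] EuclideanSpace ℂ (Fin M)) = 0 := by
    refine Module.Basis.ext (EuclideanSpace.basisFun (Fin M) ℂ).toBasis (fun q => ?_)
    rw [OrthonormalBasis.coe_toBasis, EuclideanSpace.basisFun_apply]
    simpa using hq q
  have hCLM : Matrix.toEuclideanCLM (𝕜 := ℂ) (C m r) = 0 := by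
    apply ContinuousLinearMap.coe_injective
    rw [hLM]
    rfl
  have hfinal : C m r = 0 := by
    calc C m r
        = (Matrix.toEuclideanCLM (𝕜 := ℂ)).symm (Matrix.toEuclideanCLM (𝕜 := ℂ) (C m r)) :=
          (StarAlgEquiv.symm_apply_apply _ _).symm
      _ = (Matrix.toEuclideanCLM (𝕜 := ℂ)).symm 0 := by rw [hCLM]
      _ = 0 := map_zero _
  simpa using hfinal

lemma inner_term_left (C : Coef) (j : Fin N → ZMod p) (u v : L2 N M) :
    ⟪termCLM N M p C j u, v⟫
      = ∫ x, ⟪Matrix.toEuclideanCLM (𝕜 := ℂ) (C j (cubeIdx N p x)) (u (x + hvec N p j)), v x⟫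
          ∂(volume : Measure (Torus N)) := by
  rw [MeasureTheory.L2.inner_def]
  refine integral_congr_ae ?_
  filter_upwards [coeFn_termCLM N M p C j u] with x hx
  rw [hx]

lemma inner_term_right (C : Coef) (k : Fin N → ZMod p) (u v : L2 N M) :
    ⟪u, termCLM N M p C k v⟫
      = ∫ x, ⟪u x, Matrix.toEuclideanCLM (𝕜 := ℂ) (C k (cubeIdx N p x)) (v (x + hvec N p k))⟫
          ∂(volume : Measure (Torus N)) := by
  rw [MeasureTheory.L2.inner_def]
  refine integral_congr_ae ?_
  filter_upwards [coeFn_termCLM N M p C k v] with x hx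
  rw [hx]

lemma adjoint_inner (C : Coef) (u v : L2 N M) :
    ⟪opCLM N M p (Cdag N M p C) u, v⟫ = ⟪u, opCLM N M p C v⟫ := by
  classical
  have hL : ⟪opCLM N M p (Cdag N M p C) u, v⟫
      = ∑ j : Fin N → ZMod p, ⟪termCLM N M p (Cdag N M p C) j u, v⟫ := by
    rw [opCLM, ContinuousLinearMap.sum_apply, sum_inner]
  have hRs : ⟪u, opCLM N M p C v⟫
      = ∑ k : Fin N → ZMod p, ⟪u, termCLM N M p C k v⟫ := by
    rw [opCLM, ContinuousLinearMap.sum_apply, inner_sum]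
  rw [hL, hRs]
  have key : ∀ k : Fin N → ZMod p,
      ⟪u, termCLM N M p C k v⟫ = ⟪termCLM N M p (Cdag N M p C) (-k) u, v⟫ := by
    intro k
    rw [inner_term_left, inner_term_right]
    have hmp : MeasurePreserving (⇑(tauEquiv N (hvec N p (-k))))
        (volume : Measure (Torus N)) volume := by
      have hco : ⇑(tauEquiv N (hvec N p (-k))) = fun x => x + hvec N p (-k) := rfl
      rw [hco]
      exact mp_tau N (hvec N p (-k))
    rw [← hmp.integral_comp'
      (fun x => ⟪u x, Matrix.toEuclideanCLM (𝕜 := ℂ) (C k (cubeIdx N p x)) (v (x + hvec N p k))⟫)]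
    refine integral_congr_ae (Filter.Eventually.of_forall (fun x => ?_))
    dsimp only
    have he : tauEquiv N (hvec N p (-k)) x = x + hvec N p (-k) := rfl
    rw [he, cubeIdx_add]
    have hv : x + hvec N p (-k) + hvec N p k = x := by
      rw [add_assoc, ← hvec_add, neg_add_cancel, hvec_zero, add_zero]
    rw [hv]
    -- now LHS: ⟪u (x + hvec (-k)), toCLM (C k (cubeIdx x + -k)) (v x)⟫
    -- RHS: ⟪toCLM (Cdag C (-k) (cubeIdx x)) (u (x + hvec (-k))), v x⟫
    have hst : Matrix.toEuclideanCLM (𝕜 := ℂ) (Cdag N M p C (-k) (cubeIdx N p x))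
        = ContinuousLinearMap.adjoint
            (Matrix.toEuclideanCLM (𝕜 := ℂ) (C k (cubeIdx N p x + -k))) := by
      rw [Cdag]
      rw [map_star]
      rw [ContinuousLinearMap.star_eq_adjoint]
      congr 2
      rw [neg_neg]
    rw [hst, ContinuousLinearMap.adjoint_inner_left]
  rw [Finset.sum_congr rfl (fun k _ => key k)]
  exact (Fintype.sum_equiv (Equiv.neg _) _ _ (fun j => by simp)).symm

set_option maxHeartbeats 2000000 in
def Phi : Matrix ((Fin N → ZMod p) × Fin M) ((Fin N → ZMod p) × Fin M) ℂ
    →⋆ₐ[ℂ] (L2 N M →L[ℂ] L2 N M) where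
  toFun B := opCLM N M p (CB N M p B)
  map_one' := by
    refine (opCLM_unique N M p (C := CB N M p 1) (T := 1) (fun u => ?_)).symm
    rw [ContinuousLinearMap.one_apply, opOf_CB_one]
  map_mul' B B' := by
    refine (opCLM_unique N M p (C := CB N M p (B * B'))
      (T := opCLM N M p (CB N M p B) * opCLM N M p (CB N M p B')) (fun u => ?_)).symm
    have h1 : (opCLM N M p (CB N M p B) * opCLM N M p (CB N M p B')) u
        = opCLM N M p (CB N M p B) (opCLM N M p (CB N M p B') u) := rfl
    rw [h1]
    refine (coeFn_opCLM N M p _ _).trans ?_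
    refine (opOf_congr N M p _ (coeFn_opCLM N M p _ u)).trans ?_
    rw [opOf_comp, CB_mul]
  map_zero' := by
    refine (opCLM_unique N M p (C := CB N M p 0) (T := 0) (fun u => ?_)).symm
    have h0 : (0 : L2 N M →L[ℂ] L2 N M) u = 0 := rfl
    rw [h0]
    refine (Lp.coeFn_zero _ _ _).trans ?_
    have hCB : CB N M p 0 = 0 := by funext j r q q'; simp [CB]
    have hz : opOf N M p (CB N M p 0) ⇑u = fun _ => 0 := by
      rw [hCB]; funext x; simp [opOf]
    rw [hz]
    exact Filter.Eventually.of_forall (fun x => rfl)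
  map_add' B B' := by
    refine (opCLM_unique N M p (C := CB N M p (B + B'))
      (T := opCLM N M p (CB N M p B) + opCLM N M p (CB N M p B')) (fun u => ?_)).symm
    rw [ContinuousLinearMap.add_apply]
    refine (Lp.coeFn_add _ _).trans ?_
    have hCB : CB N M p (B + B') = CB N M p B + CB N M p B' := by
      funext j r q q'; simp [CB]
    rw [hCB, opOf_add]
    exact Filter.EventuallyEq.add (coeFn_opCLM N M p _ u) (coeFn_opCLM N M p _ u)
  commutes' c := by
    refine (opCLM_unique N M p (C := CB N M p (algebraMap ℂ _ c))
      (T := algebraMap ℂ _ c) (fun u => ?_)).symm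
    have halg : (algebraMap ℂ (L2 N M →L[ℂ] L2 N M) c) u = c • u := by
      rw [Algebra.algebraMap_eq_smul_one]; rfl
    rw [halg]
    refine (Lp.coeFn_smul c u).trans ?_
    have hm : CB N M p (algebraMap ℂ _ c) = c • CB N M p 1 := by
      funext j r q q'
      simp [CB, Algebra.algebraMap_eq_smul_one]
    rw [hm, opOf_smul, opOf_CB_one]
  map_star' B := by
    show opCLM N M p (CB N M p (star B)) = star (opCLM N M p (CB N M p B))
    rw [ContinuousLinearMap.star_eq_adjoint, CB_star]
    exact (ContinuousLinearMap.eq_adjoint_iff _ _).mpr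
      (fun u v => adjoint_inner N M p (CB N M p B) u v)

end Main

/-- Fix `p ≥ 1`, `h = 1/p`.  The `*`-algebra `H^h` of operators
`(A u)(x) = Σ_j A_j(x) u(x + h j)` with cube-step coefficients is `*`-isomorphic to the full
matrix algebra `ℂ^{Mp^N × Mp^N}`: there is an injective unital `*`-algebra homomorphism
`Φ` from the matrix algebra into `B(L²)` whose range is exactly `H^h` and which inverts the
assignment `A ↦ B_A`; in particular `A ↦ B_A` is bijective. -/
theorem stmt7 (N M p : ℕ) [NeZero p] :
    ∃ Φ : Matrix ((Fin N → ZMod p) × Fin M) ((Fin N → ZMod p) × Fin M) ℂ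
        →⋆ₐ[ℂ] (L2 N M →L[ℂ] L2 N M),
      Function.Injective Φ ∧
      Set.range Φ = {T : L2 N M →L[ℂ] L2 N M |
        ∃ C, ∀ u : L2 N M,
          (T u : Torus N → EuclideanSpace ℂ (Fin M)) =ᵐ[volume] opOf N M p C u} ∧
      ∀ (C : (Fin N → ZMod p) → (Fin N → ZMod p) → Matrix (Fin M) (Fin M) ℂ)
        (T : L2 N M →L[ℂ] L2 N M),
        (∀ u : L2 N M,
          (T u : Torus N → EuclideanSpace ℂ (Fin M)) =ᵐ[volume] opOf N M p C u) →
        Φ (Bmat N M p C) = T := by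
  classical
  refine ⟨Phi N M p, ?_, ?_, ?_⟩
  · -- injectivity
    intro B₁ B₂ hBB
    have hphi : ∀ B, Phi N M p B = opCLM N M p (CB N M p B) := fun _ => rfl
    have hdiff : opCLM N M p (CB N M p (B₁ - B₂)) = 0 := by
      have hT : Phi N M p B₁ - Phi N M p B₂ = opCLM N M p (CB N M p (B₁ - B₂)) := by
        apply opCLM_unique
        intro u
        have h1 : (Phi N M p B₁ - Phi N M p B₂) u = Phi N M p B₁ u - Phi N M p B₂ u := rfl
        rw [h1]
        refine (Lp.coeFn_sub _ _).trans ?_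
        have hCB : CB N M p (B₁ - B₂) = CB N M p B₁ - CB N M p B₂ := by
          funext j r q q'; simp [CB]
        rw [hCB, opOf_sub]
        exact Filter.EventuallyEq.sub (coeFn_opCLM N M p _ u) (coeFn_opCLM N M p _ u)
      rw [← hT, hBB, sub_self]
    have hC0 : CB N M p (B₁ - B₂) = 0 := C_eq_zero N M p hdiff
    have : B₁ - B₂ = 0 := by
      have hB : Bmat N M p (CB N M p (B₁ - B₂)) = B₁ - B₂ := Bmat_CB N M p _
      rw [hC0] at hB
      rw [← hB]
      funext rq jq
      simp [Bmat]
    exact sub_eq_zero.mp this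
  · -- range
    ext T
    constructor
    · rintro ⟨B, rfl⟩
      exact ⟨CB N M p B, fun u => coeFn_opCLM N M p (CB N M p B) u⟩
    · rintro ⟨C, hC⟩
      refine ⟨Bmat N M p C, ?_⟩
      have hphi : Phi N M p (Bmat N M p C) = opCLM N M p (CB N M p (Bmat N M p C)) := rfl
      rw [hphi, CB_Bmat]
      exact (opCLM_unique N M p hC).symm
  · -- inverts Bmat
    intro C T hT
    have hphi : Phi N M p (Bmat N M p C) = opCLM N M p (CB N M p (Bmat N M p C)) := rfl
    rw [hphi, CB_Bmat]
    exact (opCLM_unique N M p hT).symm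
end
end
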